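/- Let q be a prime power, and suppose α = (α₀,...,αₙ) ∈ F_q^{n+1} satisfies rank H_{n₁,n₂}(α) = r, ρ(α) = r, π(α) = 0, with r ≥ 2. Let A₁, A₂ be the characteristic polynomials, with deg A₁ = r and A₂ chosen with d₂ := deg A₂ < r, and d₂ ≥ 2. Let A₃ be the remainder of A₁ modulo A₂ (so A₁ = R₂A₂ + A₃ with deg A₃ < d₂). Then the truncated sequence α⁽²⁾ := (α₀,...,α_{r+d₂-2}) satisfies rank of its associated near-square Hankel matrix equal to d₂, ρ(α⁽²⁾) = d₂, π(α⁽²⁾) = 0, and has characteristic polynomials A₂, A₃. -/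

import Mathlib

open Matrix Polynomial

/-- The `l × m` Hankel matrix whose `(i,j)` entry (zero-indexed) is `α (i + j)`. -/
def hankel (F : Type) [Field F] (l m : ℕ) (α : ℕ → F) : Matrix (Fin l) (Fin m) F :=
  Matrix.of fun i j => α (i.1 + j.1)

/-- `ρ(α)`: the largest `l ≤ n₁ = (n+2)/2` such that the top-left `l × l` Hankel matrix
of `α` is invertible (`0` if none exists). -/
noncomputable def rhoC (F : Type) [Field F] (n : ℕ) (α : ℕ → F) : ℕ :=
  sSup {l | l ≤ (n + 2) / 2 ∧ (hankel F l l α).det ≠ 0}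

/-- `π(α) = rank H_{n₁,n₂}(α) - ρ(α)`. -/
noncomputable def piC (F : Type) [Field F] (n : ℕ) (α : ℕ → F) : ℕ :=
  (hankel F ((n + 2) / 2) ((n + 3) / 2) α).rank - rhoC F n α

/-- `deg B ≤ k` for an integer bound `k` (so `k < 0` forces `B = 0`). -/
def degLE (F : Type) [Field F] (B : Polynomial F) (k : ℤ) : Prop :=
  ∀ i : ℕ, k < (i : ℤ) → B.coeff i = 0

/-- `A₁, A₂` are characteristic polynomials for the sequence `α` (of length `n+1`) with
first characteristic degree `c₁ = r` and second characteristic degree `c₂ = n+2-r`: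
the kernels of all the Hankel matrices `H_{l,m}(α)`, `l+m-2 = n`, consist exactly of the
(coefficient vectors of) polynomials `B₁A₁ + B₂A₂` with `deg B₁ ≤ m - c₁ - 1` and
`deg B₂ ≤ m - c₂ - 1`. -/
def IsCharSeq (F : Type) [Field F] (n r : ℕ) (A₁ A₂ : Polynomial F) (α : ℕ → F) : Prop :=
  ∀ l m : ℕ, 1 ≤ l → 1 ≤ m → l + m = n + 2 →
    {v : Fin m → F | (hankel F l m α).mulVec v = 0} =
    {v : Fin m → F | ∃ B₁ B₂ : Polynomial F,
      degLE F B₁ ((m : ℤ) - r - 1) ∧ degLE F B₂ ((m : ℤ) - ((n : ℤ) + 2 - r) - 1) ∧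
      v = fun i : Fin m => (B₁ * A₁ + B₂ * A₂).coeff (i : ℕ)}

/-- A sequence `α ∈ F^{n+1}` viewed as a function `ℕ → F` (zero beyond index `n`). -/
def extSeq (F : Type) [Field F] (n : ℕ) (α : Fin (n + 1) → F) : ℕ → F :=
  fun i => if h : i < n + 1 then α ⟨i, h⟩ else 0

/-- The extension of a sequence of length `n+1` by a new entry `c` at index `n+1`. -/
def extendSeq (F : Type) [Field F] (n : ℕ) (α : ℕ → F) (c : F) : ℕ → F :=
  fun i => if i = n + 1 then c else α i

namespace Stmt9Aux

variable {F : Type} [Field F]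

def degLT (s : ℕ) (B : Polynomial F) : Prop := ∀ i : ℕ, s ≤ i → B.coeff i = 0

lemma degLT_mono {s t : ℕ} (h : s ≤ t) {B : Polynomial F} (hB : degLT s B) : degLT t B :=
  fun i hi => hB i (le_trans h hi)

lemma degLT_natDegree {B : Polynomial F} {s : ℕ} (hB : degLT s B) (hs : 1 ≤ s) :
    B.natDegree < s := by
  by_cases h0 : B = 0
  · simp only [h0, Polynomial.natDegree_zero]; omega
  · by_contra h
    exact (Polynomial.leadingCoeff_ne_zero.mpr h0) (hB _ (le_of_not_gt h))

lemma degLT_of_natDegree_lt {B : Polynomial F} {s : ℕ} (h : B.natDegree < s) : degLT s B :=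
  fun i hi => Polynomial.coeff_eq_zero_of_natDegree_lt (lt_of_lt_of_le h hi)

lemma degLT_zero (s : ℕ) : degLT s (0 : Polynomial F) := fun i _ => by simp

lemma eq_zero_of_degLT_zero {B : Polynomial F} (h : degLT 0 B) : B = 0 :=
  Polynomial.ext fun i => by simpa using h i (Nat.zero_le i)

lemma degLT_add {s : ℕ} {B C : Polynomial F} (hB : degLT s B) (hC : degLT s C) :
    degLT s (B + C) := fun i hi => by simp [Polynomial.coeff_add, hB i hi, hC i hi]

lemma degLT_mul {s t u : ℕ} {B A : Polynomial F} (hB : degLT s B) (hA : degLT t A)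
    (hu : 1 ≤ s → 1 ≤ t → s + t ≤ u + 1) : degLT u (B * A) := by
  intro i hi
  rw [Polynomial.coeff_mul]
  refine Finset.sum_eq_zero fun x hx => ?_
  rw [Finset.HasAntidiagonal.mem_antidiagonal] at hx
  rcases le_or_gt s x.1 with h1 | h1
  · rw [hB x.1 h1, zero_mul]
  · rcases le_or_gt t x.2 with h2 | h2
    · rw [hA x.2 h2, mul_zero]
    · exact absurd (hu (by omega) (by omega)) (by omega)

lemma degLT_of_degLE {B : Polynomial F} {k : ℤ} {s : ℕ} (h : degLE F B k) (hs : k < (s : ℤ)) :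
    degLT s B := fun i hi => h i (by omega)

lemma degLE_of_degLT {B : Polynomial F} {k : ℤ} {s : ℕ} (h : degLT s B) (hs : (s : ℤ) ≤ k + 1) :
    degLE F B k := fun i hk => h i (by omega)

lemma degLE_zero (k : ℤ) : degLE F (0 : Polynomial F) k := fun i _ => by simp

noncomputable def convL (α : ℕ → F) (i : ℕ) : Polynomial F →ₗ[F] F where
  toFun P := P.sum fun j c => c * α (i + j)
  map_add' P Q := Polynomial.sum_add_index P Q _ (fun n => zero_mul _) (fun n a b => add_mul a b _)
  map_smul' c P := by
    rw [Polynomial.sum_smul_index P c (fun j a => a * α (i + j)) (fun n => zero_mul _), Polynomial.sum_def,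
      Polynomial.sum_def, smul_eq_mul, Finset.mul_sum]
    exact Finset.sum_congr rfl fun j _ => by simp [RingHom.id_apply]; ring

lemma convL_monomial (α : ℕ → F) (i k : ℕ) (b : F) :
    convL α i (monomial k b) = b * α (i + k) := by
  show (monomial k b).sum (fun j c => c * α (i + j)) = b * α (i + k)
  exact Polynomial.sum_monomial_index b _ (zero_mul _)

lemma convL_mul (α : ℕ → F) (B A : Polynomial F) (i : ℕ) :
    convL α i (B * A) = B.sum fun k c => c * convL α (i + k) A := by
  induction B using Polynomial.induction_on' with
  | add p q hp hq =>
      rw [add_mul, map_add, hp, hq]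
      exact (Polynomial.sum_add_index p q (fun k c => c * convL α (i + k) A)
        (fun n => zero_mul _) (fun n a b => add_mul a b _)).symm
  | monomial k b =>
      rw [Polynomial.sum_monomial_index b (fun k c => c * convL α (i + k) A) (zero_mul _)]
      induction A using Polynomial.induction_on' with
      | add p q hp hq => rw [mul_add, map_add, hp, hq, map_add, mul_add]
      | monomial j a =>
          rw [Polynomial.monomial_mul_monomial, convL_monomial, convL_monomial,
            ← add_assoc]
          ring

lemma convL_mul_eq_zero {α : ℕ → F} {B A : Polynomial F} {s i : ℕ} (hB : degLT s B)
    (h : ∀ k, k < s → convL α (i + k) A = 0) : convL α i (B * A) = 0 := by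
  rw [convL_mul, Polynomial.sum_def]
  refine Finset.sum_eq_zero fun k hk => ?_
  have hks : k < s := by
    by_contra hc
    exact (Polynomial.mem_support_iff.mp hk) (hB k (le_of_not_gt hc))
  rw [h k hks, mul_zero]

noncomputable def polyOf {m : ℕ} (v : Fin m → F) : Polynomial F := ∑ j : Fin m, monomial (j : ℕ) (v j)

lemma polyOf_coeff {m : ℕ} (v : Fin m → F) (i : ℕ) :
    (polyOf v).coeff i = if h : i < m then v ⟨i, h⟩ else 0 := by
  rw [polyOf, Polynomial.finset_sum_coeff]
  simp only [Polynomial.coeff_monomial]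
  split
  · next h =>
      rw [Finset.sum_eq_single (⟨i, h⟩ : Fin m)]
      · simp
      · intro j _ hj
        rw [if_neg (fun e => hj (Fin.ext e))]
      · intro hj
        exact absurd (Finset.mem_univ _) hj
  · next h =>
      refine Finset.sum_eq_zero fun j _ => ?_
      rw [if_neg (fun e => h (by rw [← e]; exact j.isLt))]

lemma degLT_polyOf {m : ℕ} (v : Fin m → F) : degLT m (polyOf v) := fun i hi => by
  rw [polyOf_coeff, dif_neg (by omega)]

lemma polyOf_coeff_fin {m : ℕ} (v : Fin m → F) (j : Fin m) : (polyOf v).coeff j = v j := by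
  rw [polyOf_coeff, dif_pos j.isLt]

lemma polyOf_eq {m : ℕ} {P : Polynomial F} (h : degLT m P) :
    polyOf (fun j : Fin m => P.coeff j) = P := by
  ext i
  rw [polyOf_coeff]
  split
  · rfl
  · next hm => exact (h i (le_of_not_gt hm)).symm

lemma hankel_mulVec (l m : ℕ) (α : ℕ → F) (v : Fin m → F) (i : Fin l) :
    (hankel F l m α).mulVec v i = convL α i (polyOf v) := by
  rw [polyOf, map_sum, Matrix.mulVec, dotProduct]
  refine Finset.sum_congr rfl fun j _ => ?_
  rw [convL_monomial, hankel, Matrix.of_apply, mul_comm]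

noncomputable def polyOfL (m : ℕ) : (Fin m → F) →ₗ[F] Polynomial F where
  toFun := polyOf
  map_add' u v := by simp [polyOf, Finset.sum_add_distrib]
  map_smul' c v := by simp [polyOf, Polynomial.smul_monomial, Finset.smul_sum]

noncomputable def truncL (m : ℕ) : Polynomial F →ₗ[F] (Fin m → F) :=
  LinearMap.pi fun i : Fin m => Polynomial.lcoeff F (i : ℕ)

lemma truncL_apply (m : ℕ) (P : Polynomial F) : truncL m P = fun i : Fin m => P.coeff i := rfl

noncomputable def psi1 (s m : ℕ) (A : Polynomial F) : (Fin s → F) →ₗ[F] (Fin m → F) :=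
  (truncL m) ∘ₗ (LinearMap.mulRight F A) ∘ₗ (polyOfL s)

lemma psi1_apply (s m : ℕ) (A : Polynomial F) (c : Fin s → F) :
    psi1 s m A c = fun i : Fin m => (polyOf c * A).coeff i := rfl

lemma conv_eq_zero_of_mem_ker {l m : ℕ} {α : ℕ → F} {P : Polynomial F} (hP : degLT m P)
    (h : (hankel F l m α).mulVec (fun j : Fin m => P.coeff (j : ℕ)) = 0) :
    ∀ i, i < l → convL α i P = 0 := by
  intro i hi
  have := congrFun h ⟨i, hi⟩
  rwa [hankel_mulVec, polyOf_eq hP] at this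

lemma mulVec_eq_zero_of_conv {l m : ℕ} {α : ℕ → F} {P : Polynomial F} (hP : degLT m P)
    (h : ∀ i, i < l → convL α i P = 0) :
    (hankel F l m α).mulVec (fun j : Fin m => P.coeff (j : ℕ)) = 0 := by
  funext i
  rw [hankel_mulVec, polyOf_eq hP, Pi.zero_apply]
  exact h i i.isLt

end Stmt9Aux


/-- one step of the Euclidean algorithm inside a Hankel sequence.
If `α` is quasi-regular of rank `r = deg A₁ ≥ 2` with characteristic polynomials
`A₁, A₂`, `2 ≤ d₂ = deg A₂ < r`, and `A₃ = A₁ % A₂`, then the truncation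
`(α₀,…,α_{r+d₂-2})` is quasi-regular of rank `d₂` with characteristic
polynomials `A₂, A₃`. -/
theorem stmt_9 (F : Type) [Field F] [Fintype F] (n r : ℕ) (α : ℕ → F)
    (A₁ A₂ : Polynomial F)
    (hr : 2 ≤ r)
    (hrank : (hankel F ((n + 2) / 2) ((n + 3) / 2) α).rank = r)
    (hρ : rhoC F n α = r) (hπ : piC F n α = 0)
    (hcop : IsCoprime A₁ A₂) (hd1 : A₁.natDegree = r)
    (hd2 : 2 ≤ A₂.natDegree) (hd2' : A₂.natDegree < r)
    (hchar : IsCharSeq F n r A₁ A₂ α) :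
    (hankel F ((r + A₂.natDegree - 2 + 2) / 2) ((r + A₂.natDegree - 2 + 3) / 2) α).rank =
      A₂.natDegree ∧
    rhoC F (r + A₂.natDegree - 2) α = A₂.natDegree ∧
    piC F (r + A₂.natDegree - 2) α = 0 ∧
    IsCharSeq F (r + A₂.natDegree - 2) A₂.natDegree A₂ (A₁ % A₂) α := by
  classical
  open Stmt9Aux in
  set A₃ := A₁ % A₂ with hA₃def
  set d := A₂.natDegree with hd
  -- basic nonvanishing facts
  have hA₁0 : A₁ ≠ 0 := fun h => by rw [h] at hd1; simp at hd1; omega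
  have hA₂0 : A₂ ≠ 0 := fun h => by rw [h] at hd; simp at hd; omega
  -- 2r ≤ n + 2
  have hn2r : 2 * r ≤ n + 2 := by
    have h0 : (0 : ℕ) ∈ {l | l ≤ (n + 2) / 2 ∧ (hankel F l l α).det ≠ 0} :=
      ⟨Nat.zero_le _, by simp [Matrix.det_isEmpty]⟩
    have hmem : r ∈ {l | l ≤ (n + 2) / 2 ∧ (hankel F l l α).det ≠ 0} := by
      rw [← hρ, rhoC]
      exact Nat.sSup_mem ⟨0, h0⟩ ⟨(n + 2) / 2, fun x hx => hx.1⟩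
    have := hmem.1
    omega
  -- A₃ facts
  have he : A₃.natDegree < d := by
    rw [hA₃def, hd]
    exact Polynomial.natDegree_mod_lt A₁ (by omega)
  have hA₃0 : A₃ ≠ 0 := by
    intro h
    have hdvd : A₂ ∣ A₁ := EuclideanDomain.mod_eq_zero.mp h
    have := Polynomial.natDegree_eq_zero_of_isUnit (hcop.isUnit_of_dvd' hdvd dvd_rfl)
    omega
  have hcop23 : IsCoprime A₂ A₃ := by
    have h2 : A₃ = A₁ + A₂ * (-(A₁ / A₂)) := by
      rw [hA₃def, EuclideanDomain.mod_eq_sub_mul_div]; ring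
    rw [h2]
    exact hcop.symm.add_mul_left_right _
  have hQdeg : (A₁ / A₂).natDegree ≤ r - d := by
    by_cases hQ : A₁ / A₂ = 0
    · simp [hQ]
    · have hmul : A₂ * (A₁ / A₂) = A₁ - A₃ := by
        rw [hA₃def, EuclideanDomain.mod_eq_sub_mul_div]; ring
      have hle : (A₂ * (A₁ / A₂)).natDegree ≤ r := by
        rw [hmul]
        refine le_trans (Polynomial.natDegree_sub_le _ _) ?_
        rw [hd1]
        exact max_le le_rfl (by omega)
      rw [Polynomial.natDegree_mul hA₂0 hQ] at hle
      omega
  have hA₁lt : degLT (r + 1) A₁ := degLT_of_natDegree_lt (by omega)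
  have hA₂lt : degLT (d + 1) A₂ := degLT_of_natDegree_lt (by omega)
  have hA₃lt : degLT d A₃ := degLT_of_natDegree_lt he
  -- vanishing of convolutions
  have hV1 : ∀ i, i + r ≤ n → convL α i A₁ = 0 := by
    intro i hi
    have hs := hchar (n + 1 - r) (r + 1) (by omega) (by omega) (by omega)
    have hmem : (fun j : Fin (r + 1) => A₁.coeff (j : ℕ)) ∈
        {v : Fin (r + 1) → F | ∃ B₁ B₂ : Polynomial F,
          degLE F B₁ (((r + 1 : ℕ) : ℤ) - r - 1) ∧
          degLE F B₂ (((r + 1 : ℕ) : ℤ) - ((n : ℤ) + 2 - r) - 1) ∧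
          v = fun i : Fin (r + 1) => (B₁ * A₁ + B₂ * A₂).coeff (i : ℕ)} := by
      refine ⟨1, 0, fun j hj => ?_, degLE_zero _, by simp⟩
      rw [Polynomial.coeff_one, if_neg (by omega)]
    rw [← hs] at hmem
    exact conv_eq_zero_of_mem_ker (degLT_mono (by omega) hA₁lt) hmem i (by omega)
  have hV2 : ∀ i, i + 2 ≤ r → convL α i A₂ = 0 := by
    intro i hi
    have hs := hchar (r - 1) (n + 3 - r) (by omega) (by omega) (by omega)
    have hmem : (fun j : Fin (n + 3 - r) => A₂.coeff (j : ℕ)) ∈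
        {v : Fin (n + 3 - r) → F | ∃ B₁ B₂ : Polynomial F,
          degLE F B₁ (((n + 3 - r : ℕ) : ℤ) - r - 1) ∧
          degLE F B₂ (((n + 3 - r : ℕ) : ℤ) - ((n : ℤ) + 2 - r) - 1) ∧
          v = fun i : Fin (n + 3 - r) => (B₁ * A₁ + B₂ * A₂).coeff (i : ℕ)} := by
      refine ⟨0, 1, degLE_zero _, fun j hj => ?_, by simp⟩
      rw [Polynomial.coeff_one, if_neg (by omega)]
    rw [← hs] at hmem
    exact conv_eq_zero_of_mem_ker (degLT_mono (by omega) hA₂lt) hmem i (by omega)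
  have hV3 : ∀ i, i + 2 ≤ d → convL α i A₃ = 0 := by
    intro i hi
    have h1 : A₃ = A₁ - (A₁ / A₂) * A₂ := by
      rw [hA₃def, EuclideanDomain.mod_eq_sub_mul_div]; ring
    have h2 : convL α i ((A₁ / A₂) * A₂) = 0 :=
      convL_mul_eq_zero (degLT_of_natDegree_lt (show (A₁ / A₂).natDegree < r - d + 1 by omega))
        (fun k hk => hV2 (i + k) (by omega))
    rw [h1, map_sub, h2, hV1 i (by omega), sub_zero]
  -- extraction lemma
  have hExt : ∀ (k : ℕ) (P : Polynomial F), 1 ≤ k → k + 1 ≤ n + 2 → degLT (n + 2 - k) P →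
      (∀ i, i < k → convL α i P = 0) →
      ∃ B₁ B₂ : Polynomial F, degLT (n + 2 - k - r) B₁ ∧ degLT (r - k) B₂ ∧
        P = B₁ * A₁ + B₂ * A₂ := by
    intro k P hk1 hk2 hPlt hPv
    have hs := hchar k (n + 2 - k) hk1 (by omega) (by omega)
    have hmem : (fun j : Fin (n + 2 - k) => P.coeff (j : ℕ)) ∈
        {v : Fin (n + 2 - k) → F | (hankel F k (n + 2 - k) α).mulVec v = 0} :=
      mulVec_eq_zero_of_conv hPlt (fun i hik => hPv i hik)
    rw [hs] at hmem
    obtain ⟨B₁, B₂, hB₁, hB₂, hv⟩ := hmem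
    have hB₁lt : degLT (n + 2 - k - r) B₁ := degLT_of_degLE hB₁ (by omega)
    have hB₂lt : degLT (r - k) B₂ := degLT_of_degLE hB₂ (by omega)
    refine ⟨B₁, B₂, hB₁lt, hB₂lt, ?_⟩
    have hQlt : degLT (n + 2 - k) (B₁ * A₁ + B₂ * A₂) :=
      degLT_add (degLT_mul hB₁lt hA₁lt (by intro h1 h2; omega))
        (degLT_mul hB₂lt hA₂lt (by intro h1 h2; omega))
    apply Polynomial.ext
    intro j
    rcases lt_or_ge j (n + 2 - k) with hj | hj
    · exact congrFun hv ⟨j, hj⟩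
    · rw [hPlt j hj, hQlt j hj]
  -- leading coefficient arguments
  have hB1zero : ∀ B₁ B₂ P : Polynomial F, P = B₁ * A₁ + B₂ * A₂ → degLT r P →
      degLT r (B₂ * A₂) → B₁ = 0 := by
    intro B₁ B₂ P hP hPlt hB₂lt
    by_contra hB₁
    have hco : (B₁ * A₁).coeff (B₁.natDegree + r) = 0 := by
      have h1 : P.coeff (B₁.natDegree + r) = 0 := hPlt _ (by omega)
      have h2 : (B₂ * A₂).coeff (B₁.natDegree + r) = 0 := hB₂lt _ (by omega)
      rw [hP, Polynomial.coeff_add, h2, add_zero] at h1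
      exact h1
    rw [← hd1, Polynomial.coeff_mul_degree_add_degree] at hco
    exact mul_ne_zero (Polynomial.leadingCoeff_ne_zero.mpr hB₁)
      (Polynomial.leadingCoeff_ne_zero.mpr hA₁0) hco
  have hB2zero : ∀ B₂ P : Polynomial F, P = B₂ * A₂ → degLT d P → P = 0 := by
    intro B₂ P hP hPlt
    by_cases hB₂ : B₂ = 0
    · rw [hP, hB₂, zero_mul]
    · exfalso
      have hco : P.coeff (B₂.natDegree + d) = 0 := hPlt _ (by omega)
      rw [hP, hd, Polynomial.coeff_mul_degree_add_degree] at hco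
      exact mul_ne_zero (Polynomial.leadingCoeff_ne_zero.mpr hB₂)
        (Polynomial.leadingCoeff_ne_zero.mpr hA₂0) hco
  -- trivial kernels for wide matrices
  have hker0 : ∀ l m : ℕ, 1 ≤ m → m ≤ d → r ≤ l → l + m ≤ n + 2 → ∀ v : Fin m → F,
      (hankel F l m α).mulVec v = 0 → v = 0 := by
    intro l m hm1 hmd hrl hlmn v hv
    have hconv : ∀ i, i < l → convL α i (polyOf v) = 0 := by
      intro i hi
      have := congrFun hv ⟨i, hi⟩
      rwa [hankel_mulVec] at this
    obtain ⟨B₁, B₂, hB₁, hB₂, hP⟩ := hExt l (polyOf v) (by omega) (by omega)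
      (degLT_mono (by omega) (degLT_polyOf v)) hconv
    have hB₂0 : B₂ = 0 := eq_zero_of_degLT_zero (by
      rw [show (0 : ℕ) = r - l by omega]; exact hB₂)
    have hB₁0 : B₁ = 0 := hB1zero B₁ B₂ (polyOf v) hP
      (degLT_mono (by omega) (degLT_polyOf v))
      (by rw [hB₂0, zero_mul]; exact degLT_zero r)
    have h0 : polyOf v = 0 := by rw [hP, hB₁0, hB₂0]; ring
    funext j
    rw [Pi.zero_apply, ← polyOf_coeff_fin v j, h0, Polynomial.coeff_zero]
  -- det of the d × d Hankel matrix
  have hdetd : (hankel F d d α).det ≠ 0 := by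
    rw [Ne, ← Matrix.exists_mulVec_eq_zero_iff]
    rintro ⟨v, hv0, hv⟩
    apply hv0
    have hconv : ∀ i, i < d → convL α i (polyOf v) = 0 := by
      intro i hi
      have := congrFun hv ⟨i, hi⟩
      rwa [hankel_mulVec] at this
    obtain ⟨B₁, B₂, hB₁, hB₂, hP⟩ := hExt d (polyOf v) (by omega) (by omega)
      (degLT_mono (by omega) (degLT_polyOf v)) hconv
    have hB₁0 : B₁ = 0 := hB1zero B₁ B₂ (polyOf v) hP
      (degLT_mono (by omega) (degLT_polyOf v))
      (degLT_mul hB₂ hA₂lt (by intro h1 h2; omega))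
    have hP' : polyOf v = B₂ * A₂ := by rw [hP, hB₁0]; ring
    have h0 : polyOf v = 0 := hB2zero B₂ (polyOf v) hP' (degLT_polyOf v)
    funext j
    rw [Pi.zero_apply, ← polyOf_coeff_fin v j, h0, Polynomial.coeff_zero]
  -- rho of the truncated sequence
  have h22 : r + d - 2 + 2 = r + d := by omega
  have h23 : r + d - 2 + 3 = r + d + 1 := by omega
  have hrho' : rhoC F (r + d - 2) α = d := by
    rw [rhoC, h22]
    have hdm : d ∈ {l | l ≤ (r + d) / 2 ∧ (hankel F l l α).det ≠ 0} := ⟨by omega, hdetd⟩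
    apply le_antisymm
    · apply csSup_le ⟨d, hdm⟩
      intro l hl
      by_contra hld
      push_neg at hld
      have hl1 : l ≤ r - 1 := by have := hl.1; omega
      apply hl.2
      rw [← Matrix.exists_mulVec_eq_zero_iff]
      refine ⟨fun j : Fin l => A₂.coeff (j : ℕ), ?_, ?_⟩
      · intro h0
        have hc := congrFun h0 ⟨d, by omega⟩
        simp only [Pi.zero_apply] at hc
        exact (Polynomial.leadingCoeff_ne_zero.mpr hA₂0)
          (by rwa [Polynomial.leadingCoeff, ← hd])
      · funext i
        rw [hankel_mulVec, polyOf_eq (degLT_mono (by omega) hA₂lt), Pi.zero_apply]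
        have hi := i.isLt
        exact hV2 i (by omega)
    · exact le_csSup ⟨(r + d) / 2, fun x hx => hx.1⟩ hdm
  -- main kernel/rank computation
  have hmain : ∀ l m : ℕ, 1 ≤ l → 1 ≤ m → l + m = r + d →
      ({v : Fin m → F | (hankel F l m α).mulVec v = 0} =
        {v : Fin m → F | ∃ B₁ B₂ : Polynomial F, degLE F B₁ ((m : ℤ) - d - 1) ∧
          degLE F B₂ ((m : ℤ) - r - 1) ∧
          v = fun i : Fin m => (B₁ * A₂ + B₂ * A₃).coeff (i : ℕ)}) ∧
      (hankel F l m α).rank + ((m - d) + (m - r)) = m := by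
    intro l m hl1 hm1 hlm
    set s₁ := m - d with hs₁
    set s₂ := m - r with hs₂
    set K := LinearMap.ker ((hankel F l m α).mulVecLin) with hK
    set ψ := LinearMap.coprod (psi1 s₁ m A₂) (psi1 s₂ m A₃) with hψ
    have hQltgen : ∀ (c₁ : Fin s₁ → F) (c₂ : Fin s₂ → F),
        degLT m (polyOf c₁ * A₂ + polyOf c₂ * A₃) := fun c₁ c₂ =>
      degLT_add (degLT_mul (degLT_polyOf c₁) hA₂lt (by intro h1 h2; omega))
        (degLT_mul (degLT_polyOf c₂) hA₃lt (by intro h1 h2; omega))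
    have hψapp : ∀ (c₁ : Fin s₁ → F) (c₂ : Fin s₂ → F),
        ψ (c₁, c₂) = fun i : Fin m => (polyOf c₁ * A₂ + polyOf c₂ * A₃).coeff (i : ℕ) := by
      intro c₁ c₂
      funext i
      rw [hψ]
      simp [LinearMap.coprod_apply, psi1_apply, Polynomial.coeff_add]
    have hrn1 : (hankel F l m α).rank + Module.finrank F K = m := by
      rw [Matrix.rank, hK, LinearMap.finrank_range_add_finrank_ker,
        Module.finrank_fintype_fun_eq_card, Fintype.card_fin]
    -- range ψ ≤ K
    have hWK : LinearMap.range ψ ≤ K := by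
      rintro v ⟨⟨c₁, c₂⟩, rfl⟩
      rw [hK, LinearMap.mem_ker, Matrix.mulVecLin_apply, hψapp c₁ c₂]
      apply mulVec_eq_zero_of_conv (hQltgen c₁ c₂)
      intro i hil
      rw [map_add,
        convL_mul_eq_zero (degLT_polyOf c₁) (fun k hk => hV2 (i + k) (by omega)),
        convL_mul_eq_zero (degLT_polyOf c₂) (fun k hk => hV3 (i + k) (by omega)),
        add_zero]
    -- ψ injective
    have hψinj : Function.Injective ψ := by
      rw [← LinearMap.ker_eq_bot]
      rw [Submodule.eq_bot_iff]
      rintro ⟨c₁, c₂⟩ hz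
      rw [LinearMap.mem_ker] at hz
      have hQ0 : polyOf c₁ * A₂ + polyOf c₂ * A₃ = 0 := by
        apply Polynomial.ext
        intro i
        rw [Polynomial.coeff_zero]
        rcases lt_or_ge i m with him | him
        · have := congrFun (hψapp c₁ c₂ ▸ hz) ⟨i, him⟩
          simpa using this
        · exact hQltgen c₁ c₂ i him
      have hdvd : A₂ ∣ polyOf c₂ * A₃ := ⟨-(polyOf c₁), by linear_combination hQ0⟩
      have hdvd2 : A₂ ∣ polyOf c₂ := hcop23.dvd_of_dvd_mul_right hdvd
      have hc₂p : polyOf c₂ = 0 := by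
        by_contra hne
        have h1 := Polynomial.natDegree_le_of_dvd hdvd2 hne
        rcases Nat.eq_zero_or_pos s₂ with h0 | h0
        · exact hne (eq_zero_of_degLT_zero (h0 ▸ degLT_polyOf c₂))
        · have h2 := degLT_natDegree (degLT_polyOf c₂) h0
          rw [← hd] at h1
          omega
      have hc₁p : polyOf c₁ = 0 := by
        rw [hc₂p, zero_mul, add_zero] at hQ0
        rcases mul_eq_zero.mp hQ0 with h | h
        · exact h
        · exact absurd h hA₂0
      have hc₁ : c₁ = 0 := funext fun j => by
        rw [Pi.zero_apply, ← polyOf_coeff_fin c₁ j, hc₁p, Polynomial.coeff_zero]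
      have hc₂ : c₂ = 0 := funext fun j => by
        rw [Pi.zero_apply, ← polyOf_coeff_fin c₂ j, hc₂p, Polynomial.coeff_zero]
      rw [hc₁, hc₂]
      rfl
    have hWrank : Module.finrank F (LinearMap.range ψ) = s₁ + s₂ := by
      rw [LinearMap.finrank_range_of_inj hψinj, Module.finrank_prod,
        Module.finrank_fintype_fun_eq_card, Module.finrank_fintype_fun_eq_card,
        Fintype.card_fin, Fintype.card_fin]
    -- upper bound on the kernel dimension
    have hrkub : Module.finrank F K ≤ s₁ + s₂ := by
      rcases le_or_gt m d with hmd | hdm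
      · have hKbot : K = ⊥ := by
          rw [Submodule.eq_bot_iff]
          intro v hv
          rw [hK, LinearMap.mem_ker, Matrix.mulVecLin_apply] at hv
          exact hker0 l m hm1 hmd (by omega) (by omega) v hv
        rw [hKbot]
        simp
      · have htr : (hankel F l m α)ᵀ = hankel F m l α := by
          ext i j
          simp [hankel, Matrix.transpose_apply, Nat.add_comm]
        have hKT : ∀ u : Fin l → F, (hankel F m l α).mulVec u = 0 →
            ∃ c : Fin (r - m) → F, psi1 (r - m) l A₂ c = u := by
          intro u hu
          have hconv : ∀ i, i < m → convL α i (polyOf u) = 0 := by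
            intro i hi
            have := congrFun hu ⟨i, hi⟩
            rwa [hankel_mulVec] at this
          obtain ⟨B₁, B₂, hB₁, hB₂, hP⟩ := hExt m (polyOf u) (by omega) (by omega)
            (degLT_mono (by omega) (degLT_polyOf u)) hconv
          have hB₁0 : B₁ = 0 := hB1zero B₁ B₂ (polyOf u) hP
            (degLT_mono (by omega) (degLT_polyOf u))
            (degLT_mul hB₂ hA₂lt (by intro h1 h2; omega))
          have hPB : polyOf u = B₂ * A₂ := by rw [hP, hB₁0]; ring
          refine ⟨fun k : Fin (r - m) => B₂.coeff (k : ℕ), ?_⟩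
          rw [psi1_apply, polyOf_eq hB₂, ← hPB]
          funext i
          exact polyOf_coeff_fin u i
        set KT := LinearMap.ker ((hankel F m l α).mulVecLin) with hKT2
        have hKTle : KT ≤ LinearMap.range (psi1 (r - m) l A₂) := by
          intro u hu
          rw [hKT2, LinearMap.mem_ker, Matrix.mulVecLin_apply] at hu
          obtain ⟨c, hc⟩ := hKT u hu
          exact ⟨c, hc⟩
        have h1 : Module.finrank F KT ≤ r - m :=
          le_trans (Submodule.finrank_mono hKTle)
            (le_trans (LinearMap.finrank_range_le _)
              (by rw [Module.finrank_fintype_fun_eq_card, Fintype.card_fin]))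
        have hrn2 : (hankel F m l α).rank + Module.finrank F KT = l := by
          rw [Matrix.rank, hKT2, LinearMap.finrank_range_add_finrank_ker,
            Module.finrank_fintype_fun_eq_card, Fintype.card_fin]
        have hrt : (hankel F l m α).rank = (hankel F m l α).rank := by
          rw [← htr, Matrix.rank_transpose]
        omega
    have hfk : Module.finrank F K = s₁ + s₂ :=
      le_antisymm hrkub (by rw [← hWrank]; exact Submodule.finrank_mono hWK)
    have hWKeq : LinearMap.range ψ = K :=
      Submodule.eq_of_le_of_finrank_le hWK (by rw [hfk, hWrank])
    constructor
    · ext v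
      simp only [Set.mem_setOf_eq]
      constructor
      · intro hv
        have hvK : v ∈ K := by
          rw [hK, LinearMap.mem_ker, Matrix.mulVecLin_apply]
          exact hv
        rw [← hWKeq] at hvK
        obtain ⟨⟨c₁, c₂⟩, rfl⟩ := hvK
        refine ⟨polyOf c₁, polyOf c₂, ?_, ?_, hψapp c₁ c₂⟩
        · rcases le_or_gt d m with h | h
          · exact degLE_of_degLT (degLT_polyOf c₁) (by omega)
          · have h0 : polyOf c₁ = 0 := Polynomial.ext fun i => by
              rw [degLT_polyOf c₁ i (by omega), Polynomial.coeff_zero]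
            rw [h0]
            exact degLE_zero _
        · rcases le_or_gt r m with h | h
          · exact degLE_of_degLT (degLT_polyOf c₂) (by omega)
          · have h0 : polyOf c₂ = 0 := Polynomial.ext fun i => by
              rw [degLT_polyOf c₂ i (by omega), Polynomial.coeff_zero]
            rw [h0]
            exact degLE_zero _
      · rintro ⟨B₁, B₂, hB₁, hB₂, rfl⟩
        have hB₁lt : degLT s₁ B₁ := degLT_of_degLE hB₁ (by omega)
        have hB₂lt : degLT s₂ B₂ := degLT_of_degLE hB₂ (by omega)
        have hpsieq : ψ (fun j : Fin s₁ => B₁.coeff (j : ℕ), fun j : Fin s₂ => B₂.coeff (j : ℕ)) =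
            fun i : Fin m => (B₁ * A₂ + B₂ * A₃).coeff (i : ℕ) := by
          rw [hψapp, polyOf_eq hB₁lt, polyOf_eq hB₂lt]
        have hmemK : (fun i : Fin m => (B₁ * A₂ + B₂ * A₃).coeff (i : ℕ)) ∈ K := by
          rw [← hpsieq]
          exact hWK ⟨_, rfl⟩
        rw [hK, LinearMap.mem_ker, Matrix.mulVecLin_apply] at hmemK
        exact hmemK
    · omega
  -- assemble the four goals
  have hg1 : (hankel F ((r + d) / 2) ((r + d + 1) / 2) α).rank = d := by
    have h := (hmain ((r + d) / 2) ((r + d + 1) / 2) (by omega) (by omega) (by omega)).2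
    omega
  refine ⟨by rw [h22, h23]; exact hg1, hrho', ?_, ?_⟩
  · rw [piC, h22, h23, hg1, hrho']
    exact Nat.sub_self d
  · intro l m hl hm hlm
    have harg : ((r + d - 2 : ℕ) : ℤ) + 2 - (d : ℤ) = (r : ℤ) := by omega
    have h := (hmain l m hl hm (by omega)).1
    simp only [harg]
    exact h
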